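/- Let ε = (ε_1,…,ε_N)′ be i.i.d. real random variables with E(ε_i) = 0, E(ε_i²) = σ², E(ε_i⁴) = μ₄ < ∞, let ε* = Jε with entries ε*_i, and define π₁ = Σ_r (J_rr)², π₂ = Σ_r Σ_s (J_rs)⁴, and κ̃ = Σ_i (ε*_i)⁴/π₂ − 3·(π₁/π₂)·( Σ_i (ε*_i)² / N* )². Then E(κ̃) = μ₄ − 3σ⁴ − 3·(π₁/π₂)·[ (μ₄ − 3σ⁴)·π₁/N*² + 2σ⁴/N* ]. -/

import Mathlib

open Matrix Finset MeasureTheory ProbabilityTheory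
open scoped Kronecker

set_option linter.unusedSectionVars false
set_option maxHeartbeats 1000000

/-- The two-way within-transformation matrix
`J = (I_T − T⁻¹ι_Tι_T′) ⊗ (I_n − n⁻¹ι_nι_n′)`. -/
noncomputable def twoWayJ (n T : ℕ) : Matrix (Fin T × Fin n) (Fin T × Fin n) ℝ :=
  ((1 : Matrix (Fin T) (Fin T) ℝ) - (T : ℝ)⁻¹ • Matrix.of (fun _ _ => (1 : ℝ))) ⊗ₖ
  ((1 : Matrix (Fin n) (Fin n) ℝ) - (n : ℝ)⁻¹ • Matrix.of (fun _ _ => (1 : ℝ)))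

section MatrixAux


lemma centering_idem (T : ℕ) (hT : 0 < T) :
    ((1 : Matrix (Fin T) (Fin T) ℝ) - (T : ℝ)⁻¹ • Matrix.of (fun _ _ => (1 : ℝ))) *
    ((1 : Matrix (Fin T) (Fin T) ℝ) - (T : ℝ)⁻¹ • Matrix.of (fun _ _ => (1 : ℝ))) =
    ((1 : Matrix (Fin T) (Fin T) ℝ) - (T : ℝ)⁻¹ • Matrix.of (fun _ _ => (1 : ℝ))) := by
  ext i j
  have hT' : (T : ℝ) ≠ 0 := Nat.cast_ne_zero.mpr hT.ne'
  simp [Matrix.mul_apply, Matrix.one_apply, Matrix.sub_apply, Matrix.smul_apply,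
    sub_mul, mul_sub, Finset.sum_sub_distrib, Finset.sum_ite_eq, Finset.sum_ite_eq',
    smul_eq_mul]
  field_simp
  simp

lemma twoWayJ_idem (n T : ℕ) (hn : 0 < n) (hT : 0 < T) :
    twoWayJ n T * twoWayJ n T = twoWayJ n T := by
  rw [twoWayJ, ← Matrix.mul_kronecker_mul, centering_idem T hT, centering_idem n hn]

lemma twoWayJ_apply (n T : ℕ) (p q : Fin T × Fin n) :
    twoWayJ n T p q = ((if p.1 = q.1 then 1 else 0) - (T:ℝ)⁻¹) *
      ((if p.2 = q.2 then 1 else 0) - (n:ℝ)⁻¹) := by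
  cases p; cases q
  simp [twoWayJ, Matrix.kroneckerMap_apply, Matrix.one_apply, Matrix.sub_apply]

lemma twoWayJ_symm (n T : ℕ) (p q : Fin T × Fin n) :
    twoWayJ n T p q = twoWayJ n T q p := by
  simp only [twoWayJ_apply, eq_comm]

lemma twoWayJ_diag (n T : ℕ) (p : Fin T × Fin n) :
    twoWayJ n T p p = (1 - (T:ℝ)⁻¹) * (1 - (n:ℝ)⁻¹) := by
  simp [twoWayJ_apply]

lemma twoWayJ_trace (n T : ℕ) (hn : 2 ≤ n) (hT : 2 ≤ T) :
    ∑ p : Fin T × Fin n, twoWayJ n T p p = ((n:ℝ) - 1) * ((T:ℝ) - 1) := by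
  have hn' : (n:ℝ) ≠ 0 := by positivity
  have hT' : (T:ℝ) ≠ 0 := by positivity
  simp [twoWayJ_diag, Finset.card_univ]
  field_simp

end MatrixAux

section AlgebraAux

variable {ι : Type*} [Fintype ι] [DecidableEq ι]

lemma sum_ite_const (P : Prop) [Decidable P] (f : ι → ℝ) :
    ∑ x, (if P then f x else 0) = if P then ∑ x, f x else 0 := by
  split <;> simp

lemma swap_inner (g : ι → ι → ι → ℝ) :
    ∑ b, ∑ c, ∑ d, g b c d = ∑ c, ∑ d, ∑ b, g b c d := by
  rw [Finset.sum_comm]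
  exact Finset.sum_congr rfl fun c _ => Finset.sum_comm

lemma S1 (t s : ι → ι → ℝ) :
    ∑ a, ∑ b, ∑ c, ∑ d, (t a b * (if a = b then (1:ℝ) else 0)) *
      (s c d * (if c = d then 1 else 0))
    = (∑ a, t a a) * (∑ c, s c c) := by
  have h : ∀ a : ι, ∑ b, ∑ c, ∑ d, (t a b * (if a = b then (1:ℝ) else 0)) *
      (s c d * (if c = d then 1 else 0)) = t a a * ∑ c, s c c := by
    intro a
    rw [swap_inner]
    simp only [mul_ite, ite_mul, mul_one, one_mul, mul_zero, zero_mul, sum_ite_const,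
      Finset.sum_ite_eq, Finset.sum_ite_eq', Finset.mem_univ, if_true, ← Finset.mul_sum,
      ← Finset.sum_mul]
  simp only [h, ← Finset.sum_mul]

lemma S2 (t s : ι → ι → ℝ) :
    ∑ a, ∑ b, ∑ c, ∑ d, (t a c * (if a = c then (1:ℝ) else 0)) *
      (s b d * (if b = d then 1 else 0))
    = (∑ a, t a a) * (∑ b, s b b) := by
  simp only [mul_ite, ite_mul, mul_one, one_mul, mul_zero, zero_mul, sum_ite_const,
    Finset.sum_ite_eq, Finset.sum_ite_eq', Finset.mem_univ, if_true, ← Finset.mul_sum,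
    ← Finset.sum_mul]

lemma S3 (t s : ι → ι → ℝ) :
    ∑ a, ∑ b, ∑ c, ∑ d, (t a d * (if a = d then (1:ℝ) else 0)) *
      (s b c * (if b = c then 1 else 0))
    = (∑ a, t a a) * (∑ b, s b b) := by
  simp only [mul_ite, ite_mul, mul_one, one_mul, mul_zero, zero_mul, sum_ite_const,
    Finset.sum_ite_eq, Finset.sum_ite_eq', Finset.mem_univ, if_true, ← Finset.mul_sum,
    ← Finset.sum_mul]

lemma S4 (t : ι → ι → ι → ι → ℝ) :
    ∑ a, ∑ b, ∑ c, ∑ d, (t a b c d *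
      ((if a = b then (1:ℝ) else 0) * (if a = c then 1 else 0) * (if a = d then 1 else 0)))
    = ∑ a, t a a a a := by
  simp only [mul_ite, ite_mul, mul_one, one_mul, mul_zero, zero_mul, sum_ite_const,
    Finset.sum_ite_eq, Finset.sum_ite_eq', Finset.mem_univ, if_true]

lemma S2' (t s : ι → ι → ℝ) :
    ∑ a, ∑ b, ∑ c, ∑ d, (t a b * s c d) *
      ((if a = c then (1:ℝ) else 0) * (if b = d then 1 else 0))
    = ∑ a, ∑ b, t a b * s a b := by
  simp only [mul_ite, ite_mul, mul_one, one_mul, mul_zero, zero_mul, sum_ite_const,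
    Finset.sum_ite_eq, Finset.sum_ite_eq', Finset.mem_univ, if_true]

lemma S3' (t s : ι → ι → ℝ) :
    ∑ a, ∑ b, ∑ c, ∑ d, (t a b * s c d) *
      ((if a = d then (1:ℝ) else 0) * (if b = c then 1 else 0))
    = ∑ a, ∑ b, t a b * s b a := by
  simp only [mul_ite, ite_mul, mul_one, one_mul, mul_zero, zero_mul, sum_ite_const,
    Finset.sum_ite_eq, Finset.sum_ite_eq', Finset.mem_univ, if_true]

lemma sum_sq_expand (C : ι → ℝ) : (∑ a, C a ^ 2) ^ 2 = ∑ a, ∑ b, C a ^ 2 * C b ^ 2 := by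
  rw [sq, Finset.sum_mul_sum]

lemma sum_quad_A (C : ι → ℝ) (σ2 μ4 : ℝ) :
    ∑ a, ∑ b, ∑ c, ∑ d, (C a * C b * C c * C d) *
      (σ2 ^ 2 * ((if a = b then (1:ℝ) else 0) * (if c = d then 1 else 0)
        + (if a = c then 1 else 0) * (if b = d then 1 else 0)
        + (if a = d then 1 else 0) * (if b = c then 1 else 0))
      + (μ4 - 3 * σ2 ^ 2) *
        ((if a = b then 1 else 0) * (if a = c then 1 else 0) * (if a = d then 1 else 0)))
    = 3 * σ2 ^ 2 * (∑ a, C a ^ 2) ^ 2 + (μ4 - 3 * σ2 ^ 2) * ∑ a, C a ^ 4 := by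
  have e : ∀ a b c d : ι, (C a * C b * C c * C d) *
      (σ2 ^ 2 * ((if a = b then (1:ℝ) else 0) * (if c = d then 1 else 0)
        + (if a = c then 1 else 0) * (if b = d then 1 else 0)
        + (if a = d then 1 else 0) * (if b = c then 1 else 0))
      + (μ4 - 3 * σ2 ^ 2) *
        ((if a = b then 1 else 0) * (if a = c then 1 else 0) * (if a = d then 1 else 0)))
    = ((σ2 ^ 2 * (C a * C b)) * (if a = b then (1:ℝ) else 0)) * ((C c * C d) * (if c = d then 1 else 0))
      + ((((σ2 ^ 2 * (C a * C b)) * (C c * C d)) * ((if a = c then (1:ℝ) else 0) * (if b = d then 1 else 0)))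
      + ((((σ2 ^ 2 * (C a * C b)) * (C c * C d)) * ((if a = d then (1:ℝ) else 0) * (if b = c then 1 else 0)))
      + (((μ4 - 3 * σ2 ^ 2) * (C a * C b * C c * C d)) *
        ((if a = b then (1:ℝ) else 0) * (if a = c then 1 else 0) * (if a = d then 1 else 0))))) := by
    intro a b c d; ring
  simp only [e, Finset.sum_add_distrib]
  rw [S1 (fun x y => σ2 ^ 2 * (C x * C y)) (fun x y => C x * C y),
    S2' (fun x y => σ2 ^ 2 * (C x * C y)) (fun x y => C x * C y),
    S3' (fun x y => σ2 ^ 2 * (C x * C y)) (fun x y => C x * C y),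
    S4 (fun a b c d => (μ4 - 3 * σ2 ^ 2) * (C a * C b * C c * C d))]
  have t1 : ∑ a, σ2 ^ 2 * (C a * C a) = σ2 ^ 2 * ∑ a, C a ^ 2 := by
    rw [Finset.mul_sum]; exact Finset.sum_congr rfl fun a _ => by ring
  have t0 : ∑ c, C c * C c = ∑ c, C c ^ 2 := Finset.sum_congr rfl fun a _ => by ring
  have t2 : ∑ a, ∑ b, (σ2 ^ 2 * (C a * C b)) * (C a * C b) = σ2 ^ 2 * (∑ a, C a ^ 2) ^ 2 := by
    rw [sum_sq_expand, Finset.mul_sum]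
    refine Finset.sum_congr rfl fun a _ => ?_
    rw [Finset.mul_sum]; exact Finset.sum_congr rfl fun b _ => by ring
  have t3 : ∑ a, ∑ b, (σ2 ^ 2 * (C a * C b)) * (C b * C a) = σ2 ^ 2 * (∑ a, C a ^ 2) ^ 2 := by
    rw [sum_sq_expand, Finset.mul_sum]
    refine Finset.sum_congr rfl fun a _ => ?_
    rw [Finset.mul_sum]; exact Finset.sum_congr rfl fun b _ => by ring
  have t4 : ∑ a, (μ4 - 3 * σ2 ^ 2) * (C a * C a * C a * C a)
      = (μ4 - 3 * σ2 ^ 2) * ∑ a, C a ^ 4 := by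
    rw [Finset.mul_sum]; exact Finset.sum_congr rfl fun a _ => by ring
  rw [t1, t0, t2, t3, t4]; ring

lemma sum_quad_B (K : ι → ι → ℝ) (σ2 μ4 : ℝ) :
    ∑ a, ∑ b, ∑ c, ∑ d, (K a b * K c d) *
      (σ2 ^ 2 * ((if a = b then (1:ℝ) else 0) * (if c = d then 1 else 0)
        + (if a = c then 1 else 0) * (if b = d then 1 else 0)
        + (if a = d then 1 else 0) * (if b = c then 1 else 0))
      + (μ4 - 3 * σ2 ^ 2) *
        ((if a = b then 1 else 0) * (if a = c then 1 else 0) * (if a = d then 1 else 0)))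
    = σ2 ^ 2 * ((∑ a, K a a) ^ 2 + ∑ a, ∑ b, K a b * K a b + ∑ a, ∑ b, K a b * K b a)
      + (μ4 - 3 * σ2 ^ 2) * ∑ a, K a a ^ 2 := by
  have e : ∀ a b c d : ι, (K a b * K c d) *
      (σ2 ^ 2 * ((if a = b then (1:ℝ) else 0) * (if c = d then 1 else 0)
        + (if a = c then 1 else 0) * (if b = d then 1 else 0)
        + (if a = d then 1 else 0) * (if b = c then 1 else 0))
      + (μ4 - 3 * σ2 ^ 2) *
        ((if a = b then 1 else 0) * (if a = c then 1 else 0) * (if a = d then 1 else 0)))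
    = ((σ2 ^ 2 * K a b) * (if a = b then (1:ℝ) else 0)) * (K c d * (if c = d then 1 else 0))
      + ((((σ2 ^ 2 * K a b) * K c d) * ((if a = c then (1:ℝ) else 0) * (if b = d then 1 else 0)))
      + ((((σ2 ^ 2 * K a b) * K c d) * ((if a = d then (1:ℝ) else 0) * (if b = c then 1 else 0)))
      + (((μ4 - 3 * σ2 ^ 2) * (K a b * K c d)) *
        ((if a = b then (1:ℝ) else 0) * (if a = c then 1 else 0) * (if a = d then 1 else 0))))) := by
    intro a b c d; ring
  simp only [e, Finset.sum_add_distrib]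
  rw [S1 (fun x y => σ2 ^ 2 * K x y) K, S2' (fun x y => σ2 ^ 2 * K x y) K,
    S3' (fun x y => σ2 ^ 2 * K x y) K,
    S4 (fun a b c d => (μ4 - 3 * σ2 ^ 2) * (K a b * K c d))]
  have t1 : ∑ a, σ2 ^ 2 * K a a = σ2 ^ 2 * ∑ a, K a a := (Finset.mul_sum _ _ _).symm
  have t2 : ∑ a, ∑ b, (σ2 ^ 2 * K a b) * K a b = σ2 ^ 2 * ∑ a, ∑ b, K a b * K a b := by
    rw [Finset.mul_sum]
    refine Finset.sum_congr rfl fun a _ => ?_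
    rw [Finset.mul_sum]; exact Finset.sum_congr rfl fun b _ => by ring
  have t3 : ∑ a, ∑ b, (σ2 ^ 2 * K a b) * K b a = σ2 ^ 2 * ∑ a, ∑ b, K a b * K b a := by
    rw [Finset.mul_sum]
    refine Finset.sum_congr rfl fun a _ => ?_
    rw [Finset.mul_sum]; exact Finset.sum_congr rfl fun b _ => by ring
  have t4 : ∑ a, (μ4 - 3 * σ2 ^ 2) * (K a a * K a a)
      = (μ4 - 3 * σ2 ^ 2) * ∑ a, K a a ^ 2 := by
    rw [Finset.mul_sum]; exact Finset.sum_congr rfl fun a _ => by ring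
  rw [t1, t2, t3, t4]; ring

end AlgebraAux


section Prob
variable {Ω : Type*} [MeasureSpace Ω] [IsProbabilityMeasure (ℙ : Measure Ω)]
variable {ι : Type*} [Fintype ι] [DecidableEq ι]
variable {ε : ι → Ω → ℝ} {σ2 μ4 : ℝ}

lemma abs_pow_le_one_add (x : ℝ) {k : ℕ} (hk : k ≤ 4) : |x| ^ k ≤ 1 + x ^ 4 := by
  have h4 : x ^ 4 = |x| ^ 4 := by rw [← abs_pow]; exact (abs_of_nonneg (by positivity)).symm
  rcases le_or_gt (|x|) 1 with h | h
  · have : |x| ^ k ≤ 1 := pow_le_one₀ (abs_nonneg x) h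
    nlinarith [pow_nonneg (abs_nonneg x) 4]
  · have : |x| ^ k ≤ |x| ^ 4 := pow_le_pow_right₀ h.le hk
    nlinarith

lemma int_pow (hmeas : ∀ i, Measurable (ε i)) (hint4 : ∀ i, Integrable (fun ω => (ε i ω) ^ 4) ℙ)
    (i : ι) {k : ℕ} (hk : k ≤ 4) : Integrable (fun ω => (ε i ω) ^ k) ℙ := by
  refine Integrable.mono' ((integrable_const 1).add (hint4 i))
    ((hmeas i).pow_const k).aestronglyMeasurable (Filter.Eventually.of_forall fun ω => ?_)
  have := abs_pow_le_one_add (ε i ω) hk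
  simpa [abs_pow] using this

end Prob

set_option linter.unusedSectionVars false

section Prob2
variable {Ω : Type*} [MeasureSpace Ω] [IsProbabilityMeasure (ℙ : Measure Ω)]
variable {ι : Type*} [Fintype ι] [DecidableEq ι]
variable {ε : ι → Ω → ℝ} {σ2 μ4 : ℝ}
variable (hmeas : ∀ i, Measurable (ε i))
  (hindep : iIndepFun ε ℙ)
  (hmean : ∀ i, ∫ ω, ε i ω = 0)
  (hvar : ∀ i, ∫ ω, (ε i ω) ^ 2 = σ2)
  (hm4 : ∀ i, ∫ ω, (ε i ω) ^ 4 = μ4)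
  (hint4 : ∀ i, Integrable (fun ω => (ε i ω) ^ 4) ℙ)

include hmeas hindep hmean hvar hm4 hint4

lemma pair_int (p q : ι) : Integrable (fun ω => ε p ω * ε q ω) ℙ := by
  by_cases h : p = q
  · subst h
    simpa [pow_two] using int_pow hmeas hint4 p (k := 2) (by norm_num)
  · exact ((hindep.indepFun h).integrable_mul
      (by simpa using int_pow hmeas hint4 p (k := 1) (by norm_num))
      (by simpa using int_pow hmeas hint4 q (k := 1) (by norm_num)))

lemma pair_val (p q : ι) :
    ∫ ω, ε p ω * ε q ω = if p = q then σ2 else 0 := by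
  by_cases h : p = q
  · subst h; simp only [if_pos rfl, ← hvar p]; congr 1; funext ω; ring
  · rw [if_neg h]
    have := (hindep.indepFun h).integral_mul_eq_mul_integral
      (by simpa using (int_pow hmeas hint4 p (k := 1) (by norm_num)).aestronglyMeasurable)
      (by simpa using (int_pow hmeas hint4 q (k := 1) (by norm_num)).aestronglyMeasurable)
    simpa [hmean p, hmean q] using this

lemma leaf3 (a d : ι) (h : a ≠ d) :
    Integrable (fun ω => ε a ω ^ 3 * ε d ω) ℙ ∧ ∫ ω, ε a ω ^ 3 * ε d ω = 0 := by
  have hI : IndepFun (fun ω => ε a ω ^ 3) (ε d) ℙ := by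
    have := (hindep.indepFun h).comp (φ := fun x : ℝ => x ^ 3) (ψ := id)
      (measurable_id.pow_const 3) measurable_id
    exact this
  have h3 : Integrable (fun ω => ε a ω ^ 3) ℙ := int_pow hmeas hint4 a (by norm_num)
  have h1 : Integrable (ε d) ℙ := by simpa using int_pow hmeas hint4 d (k := 1) (by norm_num)
  refine ⟨hI.integrable_mul h3 h1, ?_⟩
  have := hI.integral_mul_eq_mul_integral h3.1 h1.1
  simpa [hmean d] using this

lemma leaf4 (p q r s : ι) (hpr : p ≠ r) (hps : p ≠ s) (hqr : q ≠ r) (hqs : q ≠ s) :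
    Integrable (fun ω => (ε p ω * ε q ω) * (ε r ω * ε s ω)) ℙ ∧
    ∫ ω, (ε p ω * ε q ω) * (ε r ω * ε s ω) =
      (if p = q then σ2 else 0) * (if r = s then σ2 else 0) := by
  have hI : IndepFun (fun ω => ε p ω * ε q ω) (fun ω => ε r ω * ε s ω) ℙ := by
    have := hindep.indepFun_mul_mul hmeas p q r s hpr hps hqr hqs
    exact this
  have h1 := pair_int hmeas hindep hmean hvar hm4 hint4 p q
  have h2 := pair_int hmeas hindep hmean hvar hm4 hint4 r s
  refine ⟨hI.integrable_mul h1 h2, ?_⟩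
  have := hI.integral_mul_eq_mul_integral h1.1 h2.1
  simp only [Pi.mul_apply] at this
  rw [this,
    pair_val hmeas hindep hmean hvar hm4 hint4 p q,
    pair_val hmeas hindep hmean hvar hm4 hint4 r s]

end Prob2
section Prob3
variable {Ω : Type*} [MeasureSpace Ω] [IsProbabilityMeasure (ℙ : Measure Ω)]
variable {ι : Type*} [Fintype ι] [DecidableEq ι]
variable {ε : ι → Ω → ℝ} {σ2 μ4 : ℝ}
variable (hmeas : ∀ i, Measurable (ε i))
  (hindep : iIndepFun ε ℙ)
  (hmean : ∀ i, ∫ ω, ε i ω = 0)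
  (hvar : ∀ i, ∫ ω, (ε i ω) ^ 2 = σ2)
  (hm4 : ∀ i, ∫ ω, (ε i ω) ^ 4 = μ4)
  (hint4 : ∀ i, Integrable (fun ω => (ε i ω) ^ 4) ℙ)

include hmeas hindep hmean hvar hm4 hint4

lemma quad_spec (a b c d : ι) :
    Integrable (fun ω => ε a ω * ε b ω * ε c ω * ε d ω) ℙ ∧
    ∫ ω, ε a ω * ε b ω * ε c ω * ε d ω =
      σ2 ^ 2 * ((if a = b then (1:ℝ) else 0) * (if c = d then 1 else 0)
        + (if a = c then 1 else 0) * (if b = d then 1 else 0)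
        + (if a = d then 1 else 0) * (if b = c then 1 else 0))
      + (μ4 - 3 * σ2 ^ 2) *
        ((if a = b then 1 else 0) * (if a = c then 1 else 0) * (if a = d then 1 else 0)) := by
  have L4 := leaf4 (ε := ε) (σ2 := σ2) hmeas hindep hmean hvar hm4 hint4
  have L3 := leaf3 (ε := ε) hmeas hindep hmean hvar hm4 hint4
  by_cases hab : a = b
  · subst hab
    by_cases hcd : c = d
    · subst hcd
      by_cases hac : a = c
      · subst hac
        have e : (fun ω : Ω => ε a ω * ε a ω * ε a ω * ε a ω) = fun ω => ε a ω ^ 4 := by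
          funext ω; ring
        refine ⟨by rw [e]; exact hint4 a, ?_⟩
        rw [e, hm4 a]; simp; ring
      · have h := L4 a a c c hac hac hac hac
        have e : (fun ω : Ω => ε a ω * ε a ω * ε c ω * ε c ω)
            = fun ω => (ε a ω * ε a ω) * (ε c ω * ε c ω) := by funext ω; ring
        refine ⟨by rw [e]; exact h.1, ?_⟩
        rw [e, h.2]; simp [hac]; ring
    · by_cases hac : a = c
      · subst hac
        have had : a ≠ d := hcd
        have h := L3 a d had
        have e : (fun ω : Ω => ε a ω * ε a ω * ε a ω * ε d ω)
            = fun ω => ε a ω ^ 3 * ε d ω := by funext ω; ring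
        refine ⟨by rw [e]; exact h.1, ?_⟩
        rw [e, h.2]; simp [hcd, had]
      · by_cases had : a = d
        · subst had
          have h := L3 a c hac
          have e : (fun ω : Ω => ε a ω * ε a ω * ε c ω * ε a ω)
              = fun ω => ε a ω ^ 3 * ε c ω := by funext ω; ring
          refine ⟨by rw [e]; exact h.1, ?_⟩
          rw [e, h.2]; simp [hac, hcd, Ne.symm hac]
        · have h := L4 a a c d hac had hac had
          have e : (fun ω : Ω => ε a ω * ε a ω * ε c ω * ε d ω)
              = fun ω => (ε a ω * ε a ω) * (ε c ω * ε d ω) := by funext ω; ring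
          refine ⟨by rw [e]; exact h.1, ?_⟩
          rw [e, h.2]; simp [hac, had, hcd]
  · by_cases hac : a = c
    · subst hac
      by_cases hbd : b = d
      · subst hbd
        have h := L4 a a b b hab hab hab hab
        have e : (fun ω : Ω => ε a ω * ε b ω * ε a ω * ε b ω)
            = fun ω => (ε a ω * ε a ω) * (ε b ω * ε b ω) := by funext ω; ring
        refine ⟨by rw [e]; exact h.1, ?_⟩
        rw [e, h.2]; simp [hab]; ring
      · by_cases had : a = d
        · subst had
          have h := L3 a b hab
          have e : (fun ω : Ω => ε a ω * ε b ω * ε a ω * ε a ω)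
              = fun ω => ε a ω ^ 3 * ε b ω := by funext ω; ring
          refine ⟨by rw [e]; exact h.1, ?_⟩
          rw [e, h.2]; simp [hab, hbd, Ne.symm hab]
        · have h := L4 a a b d hab had hab had
          have e : (fun ω : Ω => ε a ω * ε b ω * ε a ω * ε d ω)
              = fun ω => (ε a ω * ε a ω) * (ε b ω * ε d ω) := by funext ω; ring
          refine ⟨by rw [e]; exact h.1, ?_⟩
          rw [e, h.2]; simp [hab, had, hbd]
    · by_cases had : a = d
      · subst had
        by_cases hbc : b = c
        · subst hbc
          have h := L4 a a b b hab hab hab hab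
          have e : (fun ω : Ω => ε a ω * ε b ω * ε b ω * ε a ω)
              = fun ω => (ε a ω * ε a ω) * (ε b ω * ε b ω) := by funext ω; ring
          refine ⟨by rw [e]; exact h.1, ?_⟩
          rw [e, h.2]; simp [hab, hac]; ring
        · have h := L4 a a b c hab hac hab hac
          have e : (fun ω : Ω => ε a ω * ε b ω * ε c ω * ε a ω)
              = fun ω => (ε a ω * ε a ω) * (ε b ω * ε c ω) := by funext ω; ring
          refine ⟨by rw [e]; exact h.1, ?_⟩
          rw [e, h.2]; simp [hab, hac, hbc]
      · by_cases hbc : b = c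
        · subst hbc
          by_cases hbd : b = d
          · subst hbd
            have h := L3 b a (Ne.symm hab)
            have e : (fun ω : Ω => ε a ω * ε b ω * ε b ω * ε b ω)
                = fun ω => ε b ω ^ 3 * ε a ω := by funext ω; ring
            refine ⟨by rw [e]; exact h.1, ?_⟩
            rw [e, h.2]; simp [hab, hac, had]
          · have h := L4 a d b b hab hab (Ne.symm hbd) (Ne.symm hbd)
            have e : (fun ω : Ω => ε a ω * ε b ω * ε b ω * ε d ω)
                = fun ω => (ε a ω * ε d ω) * (ε b ω * ε b ω) := by funext ω; ring
            refine ⟨by rw [e]; exact h.1, ?_⟩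
            rw [e, h.2]; simp [hab, hac, had, hbd]
        · by_cases hbd : b = d
          · subst hbd
            have h := L4 a c b b hab hab (Ne.symm hbc) (Ne.symm hbc)
            have e : (fun ω : Ω => ε a ω * ε b ω * ε c ω * ε b ω)
                = fun ω => (ε a ω * ε c ω) * (ε b ω * ε b ω) := by funext ω; ring
            refine ⟨by rw [e]; exact h.1, ?_⟩
            rw [e, h.2]; simp [hab, hac, had, hbc]
          · by_cases hcd : c = d
            · subst hcd
              have h := L4 a b c c hac hac hbc hbc
              have e : (fun ω : Ω => ε a ω * ε b ω * ε c ω * ε c ω)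
                  = fun ω => (ε a ω * ε b ω) * (ε c ω * ε c ω) := by funext ω; ring
              refine ⟨by rw [e]; exact h.1, ?_⟩
              rw [e, h.2]; simp [hab, hac, had, hbc]
            · have h := L4 a b c d hac had hbc hbd
              have e : (fun ω : Ω => ε a ω * ε b ω * ε c ω * ε d ω)
                  = fun ω => (ε a ω * ε b ω) * (ε c ω * ε d ω) := by funext ω; ring
              refine ⟨by rw [e]; exact h.1, ?_⟩
              rw [e, h.2]; simp [hab, hac, had, hbc, hbd, hcd]

end Prob3


section ExpandAux
variable {ι : Type*} [Fintype ι] [DecidableEq ι]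

lemma sum_pow_two' (x : ι → ℝ) : (∑ r, x r) ^ 2 = ∑ a, ∑ b, x a * x b := by
  rw [sq, Finset.sum_mul_sum]

lemma double_sq (y : ι → ι → ℝ) :
    (∑ a, ∑ b, y a b) ^ 2 = ∑ a, ∑ b, ∑ c, ∑ d, y a b * y c d := by
  rw [sq, Finset.sum_mul_sum]
  refine Finset.sum_congr rfl fun a _ => ?_
  have h2 : ∀ c : ι, (∑ b, y a b) * (∑ d, y c d) = ∑ b, ∑ d, y a b * y c d :=
    fun c => Finset.sum_mul_sum _ _ _ _
  simp only [h2]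
  exact Finset.sum_comm

lemma sum_pow_four (x : ι → ℝ) :
    (∑ r, x r) ^ 4 = ∑ a, ∑ b, ∑ c, ∑ d, x a * x b * x c * x d := by
  have h : (∑ r, x r) ^ 4 = ((∑ r, x r) ^ 2) ^ 2 := by ring
  rw [h, sum_pow_two' x, double_sq]
  refine Finset.sum_congr rfl fun a _ => Finset.sum_congr rfl fun b _ =>
    Finset.sum_congr rfl fun c _ => Finset.sum_congr rfl fun d _ => by ring

end ExpandAux

section Prob4
variable {Ω : Type*} [MeasureSpace Ω] [IsProbabilityMeasure (ℙ : Measure Ω)]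
variable {ι : Type*} [Fintype ι] [DecidableEq ι]
variable {ε : ι → Ω → ℝ} {σ2 μ4 : ℝ}
variable (hmeas : ∀ i, Measurable (ε i))
  (hindep : iIndepFun ε ℙ)
  (hmean : ∀ i, ∫ ω, ε i ω = 0)
  (hvar : ∀ i, ∫ ω, (ε i ω) ^ 2 = σ2)
  (hm4 : ∀ i, ∫ ω, (ε i ω) ^ 4 = μ4)
  (hint4 : ∀ i, Integrable (fun ω => (ε i ω) ^ 4) ℙ)

include hmeas hindep hmean hvar hm4 hint4

lemma integral_quad_sum (W : ι → ι → ι → ι → ℝ) :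
    Integrable (fun ω => ∑ a, ∑ b, ∑ c, ∑ d,
        W a b c d * (ε a ω * ε b ω * ε c ω * ε d ω)) ℙ ∧
    ∫ ω, ∑ a, ∑ b, ∑ c, ∑ d, W a b c d * (ε a ω * ε b ω * ε c ω * ε d ω)
      = ∑ a, ∑ b, ∑ c, ∑ d, W a b c d *
        (σ2 ^ 2 * ((if a = b then (1:ℝ) else 0) * (if c = d then 1 else 0)
          + (if a = c then 1 else 0) * (if b = d then 1 else 0)
          + (if a = d then 1 else 0) * (if b = c then 1 else 0))
        + (μ4 - 3 * σ2 ^ 2) *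
          ((if a = b then 1 else 0) * (if a = c then 1 else 0) * (if a = d then 1 else 0))) := by
  have Q := quad_spec (ε := ε) (σ2 := σ2) (μ4 := μ4) hmeas hindep hmean hvar hm4 hint4
  have I1 : ∀ a b c d : ι, Integrable
      (fun ω => W a b c d * (ε a ω * ε b ω * ε c ω * ε d ω)) ℙ :=
    fun a b c d => ((Q a b c d).1.const_mul _)
  have I2 : ∀ a b c : ι, Integrable
      (fun ω => ∑ d, W a b c d * (ε a ω * ε b ω * ε c ω * ε d ω)) ℙ :=
    fun a b c => integrable_finset_sum _ fun d _ => I1 a b c d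
  have I3 : ∀ a b : ι, Integrable
      (fun ω => ∑ c, ∑ d, W a b c d * (ε a ω * ε b ω * ε c ω * ε d ω)) ℙ :=
    fun a b => integrable_finset_sum _ fun c _ => I2 a b c
  have I4 : ∀ a : ι, Integrable
      (fun ω => ∑ b, ∑ c, ∑ d, W a b c d * (ε a ω * ε b ω * ε c ω * ε d ω)) ℙ :=
    fun a => integrable_finset_sum _ fun b _ => I3 a b
  refine ⟨integrable_finset_sum _ fun a _ => I4 a, ?_⟩
  rw [integral_finset_sum _ fun a _ => I4 a]
  refine Finset.sum_congr rfl fun a _ => ?_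
  rw [integral_finset_sum _ fun b _ => I3 a b]
  refine Finset.sum_congr rfl fun b _ => ?_
  rw [integral_finset_sum _ fun c _ => I2 a b c]
  refine Finset.sum_congr rfl fun c _ => ?_
  rw [integral_finset_sum _ fun d _ => I1 a b c d]
  refine Finset.sum_congr rfl fun d _ => ?_
  rw [MeasureTheory.integral_const_mul, (Q a b c d).2]

end Prob4

/-- Let `ε` be i.i.d. with mean `0`, second moment `σ²`, fourth moment
`μ₄ < ∞`, `ε* = Jε` with `J` the two-way within-transformation matrix,
`π₁ = Σ_r (J_rr)²`, `π₂ = Σ_r Σ_s (J_rs)⁴`, `N* = (n−1)(T−1)`, and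
`κ̃ = Σ_i (ε*_i)⁴/π₂ − 3(π₁/π₂)(Σ_i (ε*_i)²/N*)²`. Then
`E(κ̃) = μ₄ − 3σ⁴ − 3(π₁/π₂)[(μ₄ − 3σ⁴)π₁/N*² + 2σ⁴/N*]`. -/
theorem expected_kurtosis_estimator {Ω : Type*} [MeasureSpace Ω]
    [IsProbabilityMeasure (ℙ : Measure Ω)] (n T : ℕ) (hn : 2 ≤ n) (hT : 2 ≤ T)
    (J : Matrix (Fin T × Fin n) (Fin T × Fin n) ℝ) (hJ : J = twoWayJ n T)
    (Nstar : ℕ) (hNstar : Nstar = (n - 1) * (T - 1))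
    (π₁ π₂ : ℝ) (hπ₁ : π₁ = ∑ r, (J r r) ^ 2) (hπ₂ : π₂ = ∑ r, ∑ s, (J r s) ^ 4)
    (ε : (Fin T × Fin n) → Ω → ℝ)
    (hmeas : ∀ i, Measurable (ε i))
    (hindep : iIndepFun ε ℙ)
    (hident : ∀ i j : Fin T × Fin n, Measure.map (ε i) ℙ = Measure.map (ε j) ℙ)
    (σ2 μ4 : ℝ)
    (hmean : ∀ i, ∫ ω, ε i ω = 0)
    (hvar : ∀ i, ∫ ω, (ε i ω) ^ 2 = σ2)
    (hm4 : ∀ i, ∫ ω, (ε i ω) ^ 4 = μ4)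
    (hint4 : ∀ i, Integrable (fun ω => (ε i ω) ^ 4) ℙ)
    (κ : Ω → ℝ)
    (hκ : ∀ ω, κ ω = (∑ i, (J.mulVec (fun j => ε j ω) i) ^ 4) / π₂
        - 3 * (π₁ / π₂) * ((∑ i, (J.mulVec (fun j => ε j ω) i) ^ 2) / (Nstar : ℝ)) ^ 2) :
    ∫ ω, κ ω = μ4 - 3 * σ2 ^ 2
      - 3 * (π₁ / π₂) * ((μ4 - 3 * σ2 ^ 2) * π₁ / (Nstar : ℝ) ^ 2 + 2 * σ2 ^ 2 / (Nstar : ℝ)) := by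
  subst hJ
  subst hNstar
  have hT0 : 0 < T := by omega
  have hn0 : 0 < n := by omega
  have hsym := twoWayJ_symm n T
  have hJJ : ∀ r s, ∑ t, twoWayJ n T r t * twoWayJ n T t s = twoWayJ n T r s := by
    intro r s
    have h2 := congrArg (fun M => M r s) (twoWayJ_idem n T hn0 hT0)
    simpa [Matrix.mul_apply] using h2
  have hrow : ∀ i, ∑ a, twoWayJ n T i a * twoWayJ n T i a = twoWayJ n T i i := by
    intro i
    rw [← hJJ i i]
    exact Finset.sum_congr rfl fun a _ => by rw [hsym a i]
  have hrow' : ∀ i, ∑ a, twoWayJ n T i a ^ 2 = twoWayJ n T i i := by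
    intro i
    rw [← hrow i]
    exact Finset.sum_congr rfl fun a _ => sq (twoWayJ n T i a) ▸ rfl
  have hNcast : (((n - 1) * (T - 1) : ℕ) : ℝ) = ((n:ℝ) - 1) * ((T:ℝ) - 1) := by
    rw [Nat.cast_mul, Nat.cast_sub (by omega : 1 ≤ n), Nat.cast_sub (by omega : 1 ≤ T),
      Nat.cast_one]
  have htr : ∑ r, twoWayJ n T r r = (((n - 1) * (T - 1) : ℕ) : ℝ) := by
    rw [hNcast]; exact twoWayJ_trace n T hn hT
  have hNpos : 0 < (((n - 1) * (T - 1) : ℕ) : ℝ) := by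
    have : 0 < (n - 1) * (T - 1) := Nat.mul_pos (by omega) (by omega)
    exact_mod_cast this
  have hdiag : ∀ r : Fin T × Fin n, 0 < twoWayJ n T r r := by
    intro r
    rw [twoWayJ_diag]
    have h1 : (1:ℝ) < T := by exact_mod_cast hT.trans_lt' one_lt_two
    have h2 : (1:ℝ) < n := by exact_mod_cast hn.trans_lt' one_lt_two
    have := inv_lt_one_of_one_lt₀ h1
    have := inv_lt_one_of_one_lt₀ h2
    nlinarith
  have hπ₂pos : 0 < π₂ := by
    rw [hπ₂]
    refine Finset.sum_pos' (fun r _ => Finset.sum_nonneg fun s _ => by positivity)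
      ⟨(⟨0, hT0⟩, ⟨0, hn0⟩), Finset.mem_univ _, ?_⟩
    refine Finset.sum_pos' (fun s _ => by positivity)
      ⟨(⟨0, hT0⟩, ⟨0, hn0⟩), Finset.mem_univ _, ?_⟩
    exact pow_pos (hdiag _) 4
  have hmv : ∀ (ω : Ω) i, (twoWayJ n T).mulVec (fun j => ε j ω) i
      = ∑ r, twoWayJ n T i r * ε r ω := by
    intro ω i; simp [Matrix.mulVec, dotProduct]
  have IQS := fun W => integral_quad_sum (ε := ε) (σ2 := σ2) (μ4 := μ4)
    hmeas hindep hmean hvar hm4 hint4 W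
  -- expansion of fourth powers
  have expand4 : ∀ i, (fun ω => ((twoWayJ n T).mulVec (fun j => ε j ω) i) ^ 4)
      = fun ω => ∑ a, ∑ b, ∑ c, ∑ d,
        (twoWayJ n T i a * twoWayJ n T i b * twoWayJ n T i c * twoWayJ n T i d) *
          (ε a ω * ε b ω * ε c ω * ε d ω) := by
    intro i; funext ω
    rw [hmv ω i, sum_pow_four]
    exact Finset.sum_congr rfl fun a _ => Finset.sum_congr rfl fun b _ =>
      Finset.sum_congr rfl fun c _ => Finset.sum_congr rfl fun d _ => by ring
  have hKsum : ∀ a b, ∑ i, twoWayJ n T i a * twoWayJ n T i b = twoWayJ n T a b := by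
    intro a b
    rw [← hJJ a b]
    exact Finset.sum_congr rfl fun i _ => by rw [hsym i a]
  have hS2 : ∀ ω : Ω, (∑ i, ((twoWayJ n T).mulVec (fun j => ε j ω) i) ^ 2)
      = ∑ a, ∑ b, twoWayJ n T a b * (ε a ω * ε b ω) := by
    intro ω
    have h1 : ∀ i, ((twoWayJ n T).mulVec (fun j => ε j ω) i) ^ 2
        = ∑ a, ∑ b, (twoWayJ n T i a * twoWayJ n T i b) * (ε a ω * ε b ω) := by
      intro i; rw [hmv ω i, sum_pow_two']
      exact Finset.sum_congr rfl fun a _ => Finset.sum_congr rfl fun b _ => by ring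
    simp only [h1]
    rw [Finset.sum_comm]
    refine Finset.sum_congr rfl fun a _ => ?_
    rw [Finset.sum_comm]
    refine Finset.sum_congr rfl fun b _ => ?_
    rw [← Finset.sum_mul, hKsum a b]
  have expandS2sq : (fun ω => (∑ i, ((twoWayJ n T).mulVec (fun j => ε j ω) i) ^ 2) ^ 2)
      = fun ω => ∑ a, ∑ b, ∑ c, ∑ d, (twoWayJ n T a b * twoWayJ n T c d) *
          (ε a ω * ε b ω * ε c ω * ε d ω) := by
    funext ω
    rw [hS2 ω, double_sq]
    exact Finset.sum_congr rfl fun a _ => Finset.sum_congr rfl fun b _ =>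
      Finset.sum_congr rfl fun c _ => Finset.sum_congr rfl fun d _ => by ring
  -- integrability
  have intA : ∀ i, Integrable (fun ω => ((twoWayJ n T).mulVec (fun j => ε j ω) i) ^ 4) ℙ := by
    intro i
    rw [expand4 i]
    exact (IQS _).1
  have intS1 : Integrable (fun ω => ∑ i, ((twoWayJ n T).mulVec (fun j => ε j ω) i) ^ 4) ℙ :=
    integrable_finset_sum _ fun i _ => intA i
  have intB : Integrable
      (fun ω => (∑ i, ((twoWayJ n T).mulVec (fun j => ε j ω) i) ^ 2) ^ 2) ℙ := by
    rw [expandS2sq]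
    exact (IQS _).1
  -- expectation of the sum of fourth powers
  have EAi : ∀ i, ∫ ω, ((twoWayJ n T).mulVec (fun j => ε j ω) i) ^ 4
      = 3 * σ2 ^ 2 * twoWayJ n T i i ^ 2 + (μ4 - 3 * σ2 ^ 2) * ∑ a, twoWayJ n T i a ^ 4 := by
    intro i
    rw [expand4 i, (IQS _).2, sum_quad_A (fun a => twoWayJ n T i a) σ2 μ4, hrow' i]
  have EA : ∫ ω, ∑ i, ((twoWayJ n T).mulVec (fun j => ε j ω) i) ^ 4
      = 3 * σ2 ^ 2 * π₁ + (μ4 - 3 * σ2 ^ 2) * π₂ := by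
    rw [integral_finset_sum _ fun i _ => intA i]
    calc ∑ i, ∫ ω, ((twoWayJ n T).mulVec (fun j => ε j ω) i) ^ 4
        = ∑ i, (3 * σ2 ^ 2 * twoWayJ n T i i ^ 2
            + (μ4 - 3 * σ2 ^ 2) * ∑ a, twoWayJ n T i a ^ 4) :=
          Finset.sum_congr rfl fun i _ => EAi i
      _ = 3 * σ2 ^ 2 * π₁ + (μ4 - 3 * σ2 ^ 2) * π₂ := by
          rw [Finset.sum_add_distrib, ← Finset.mul_sum, ← Finset.mul_sum, hπ₁, hπ₂]
  -- expectation of the square of the sum of squares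
  have EB : ∫ ω, (∑ i, ((twoWayJ n T).mulVec (fun j => ε j ω) i) ^ 2) ^ 2
      = σ2 ^ 2 * ((((n - 1) * (T - 1) : ℕ) : ℝ) ^ 2 + (((n - 1) * (T - 1) : ℕ) : ℝ)
          + (((n - 1) * (T - 1) : ℕ) : ℝ)) + (μ4 - 3 * σ2 ^ 2) * π₁ := by
    rw [expandS2sq, (IQS _).2, sum_quad_B (fun a b => twoWayJ n T a b) σ2 μ4]
    have e1 : ∑ a, ∑ b, twoWayJ n T a b * twoWayJ n T a b = (((n - 1) * (T - 1) : ℕ) : ℝ) := by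
      rw [← htr]
      exact Finset.sum_congr rfl fun a _ => hrow a
    have e2 : ∑ a, ∑ b, twoWayJ n T a b * twoWayJ n T b a = (((n - 1) * (T - 1) : ℕ) : ℝ) := by
      rw [← htr]
      exact Finset.sum_congr rfl fun a _ => hJJ a a
    rw [e1, e2, htr, ← hπ₁]
  -- put everything together
  have hκ2 : κ = fun ω =>
      (1 / π₂) * (∑ i, ((twoWayJ n T).mulVec (fun j => ε j ω) i) ^ 4)
      - (3 * (π₁ / π₂) / (((n - 1) * (T - 1) : ℕ) : ℝ) ^ 2) *
        (∑ i, ((twoWayJ n T).mulVec (fun j => ε j ω) i) ^ 2) ^ 2 := by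
    funext ω; rw [hκ ω]; ring
  simp only [hκ2]
  rw [integral_sub (intS1.const_mul _) (intB.const_mul _),
    MeasureTheory.integral_const_mul, MeasureTheory.integral_const_mul, EA, EB]
  set N : ℝ := (((n - 1) * (T - 1) : ℕ) : ℝ) with hNdef
  have hN0 : N ≠ 0 := ne_of_gt hNpos
  field_simp [hπ₂pos.ne']
  ring
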